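/- The images of the ordered monomials u₁^a u₂^b u₃^c (a, b, c ∈ ℕ) form a basis of the quotient algebra A as a ℂ-vector space. -/

import Mathlib

noncomputable section

/-- The relation defining the quotient of ℂ⟨u₁,u₂,u₃⟩ by the two-sided ideal
generated by `u₂u₁ − q⁻²u₁u₂`, `u₃u₁ − q⁻²u₁u₃ − ε·u₂²`, `u₃u₂ − q⁻²u₂u₃`. -/
def qpRel (q ε : ℂ) : FreeAlgebra ℂ (Fin 3) → FreeAlgebra ℂ (Fin 3) → Prop :=
  fun a b =>
    (a = FreeAlgebra.ι ℂ 1 * FreeAlgebra.ι ℂ 0 -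
        (q ^ 2)⁻¹ • (FreeAlgebra.ι ℂ 0 * FreeAlgebra.ι ℂ 1) ∧ b = 0) ∨
    (a = FreeAlgebra.ι ℂ 2 * FreeAlgebra.ι ℂ 0 -
        (q ^ 2)⁻¹ • (FreeAlgebra.ι ℂ 0 * FreeAlgebra.ι ℂ 2) -
        ε • (FreeAlgebra.ι ℂ 1 ^ 2) ∧ b = 0) ∨
    (a = FreeAlgebra.ι ℂ 2 * FreeAlgebra.ι ℂ 1 -
        (q ^ 2)⁻¹ • (FreeAlgebra.ι ℂ 1 * FreeAlgebra.ι ℂ 2) ∧ b = 0)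

namespace QPProof

/-- the deformation parameter `t = q⁻²` -/
def t (q : ℂ) : ℂ := (q ^ 2)⁻¹

/-- the coefficients appearing when straightening `u₃ u₁^a`. -/
def cc (q : ℂ) : ℕ → ℂ
  | 0 => 0
  | a + 1 => t q * cc q a + t q ^ (2 * a)

@[simp] lemma cc_zero (q : ℂ) : cc q 0 = 0 := rfl
lemma cc_succ (q : ℂ) (a : ℕ) : cc q (a + 1) = t q * cc q a + t q ^ (2 * a) := rfl

/-- the vector space on which the quotient algebra acts -/
abbrev V := (ℕ × ℕ × ℕ) →₀ ℂ

/-- linear endomorphism of `V` determined by values on basis vectors -/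
def mkT (f : ℕ × ℕ × ℕ → V) : V →ₗ[ℂ] V :=
  Finsupp.lsum ℂ fun p => LinearMap.toSpanSingleton ℂ V (f p)

@[simp] lemma mkT_single (f : ℕ × ℕ × ℕ → V) (p : ℕ × ℕ × ℕ) (r : ℂ) :
    mkT f (Finsupp.single p r) = r • f p := by
  simp [mkT, LinearMap.toSpanSingleton_apply]

/-- action of `u₁` -/
def T1 : Module.End ℂ V := mkT fun p => Finsupp.single (p.1 + 1, p.2.1, p.2.2) 1

/-- action of `u₂` -/
def T2 (q : ℂ) : Module.End ℂ V :=
  mkT fun p => t q ^ p.1 • Finsupp.single (p.1, p.2.1 + 1, p.2.2) 1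

/-- action of `u₃` -/
def T3 (q ε : ℂ) : Module.End ℂ V :=
  mkT fun p =>
    t q ^ (p.1 + p.2.1) • Finsupp.single (p.1, p.2.1, p.2.2 + 1) 1 +
      (ε * cc q p.1) • Finsupp.single (p.1 - 1, p.2.1 + 2, p.2.2) 1

lemma T1_single (p : ℕ × ℕ × ℕ) (r : ℂ) :
    T1 (Finsupp.single p r) = r • Finsupp.single (p.1 + 1, p.2.1, p.2.2) (1 : ℂ) := by
  simp [T1]

lemma T2_single (q : ℂ) (p : ℕ × ℕ × ℕ) (r : ℂ) :
    T2 q (Finsupp.single p r) =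
      r • (t q ^ p.1 • Finsupp.single (p.1, p.2.1 + 1, p.2.2) (1 : ℂ)) := by
  simp [T2]

lemma T3_single (q ε : ℂ) (p : ℕ × ℕ × ℕ) (r : ℂ) :
    T3 q ε (Finsupp.single p r) =
      r • (t q ^ (p.1 + p.2.1) • Finsupp.single (p.1, p.2.1, p.2.2 + 1) (1 : ℂ) +
        (ε * cc q p.1) • Finsupp.single (p.1 - 1, p.2.1 + 2, p.2.2) (1 : ℂ)) := by
  simp [T3]

/-- relation 1 holds in the representation -/
lemma rel1 (q ε : ℂ) : T2 q * T1 = t q • (T1 * T2 q) := by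
  apply Finsupp.lhom_ext
  rintro ⟨a, b, c⟩ r
  simp only [Module.End.mul_apply, LinearMap.smul_apply, T1_single, T2_single,
    map_smul, map_add]
  module

/-- relation 3 holds in the representation -/
lemma rel3 (q ε : ℂ) : T3 q ε * T2 q = t q • (T2 q * T3 q ε) := by
  apply Finsupp.lhom_ext
  rintro ⟨a, b, c⟩ r
  simp only [Module.End.mul_apply, LinearMap.smul_apply, T2_single, T3_single,
    map_smul, map_add]
  cases a with
  | zero =>
      simp only [cc_zero, mul_zero, zero_smul, add_zero, smul_zero, zero_add]
      module
  | succ a =>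
      simp only [Nat.succ_sub_one]
      module

/-- relation 2 holds in the representation -/
lemma rel2 (q ε : ℂ) : T3 q ε * T1 = t q • (T1 * T3 q ε) + ε • (T2 q * T2 q) := by
  apply Finsupp.lhom_ext
  rintro ⟨a, b, c⟩ r
  simp only [Module.End.mul_apply, LinearMap.smul_apply, LinearMap.add_apply,
    T1_single, T2_single, T3_single, map_smul, map_add, Nat.add_sub_cancel]
  cases a with
  | zero =>
      simp only [cc_zero, cc_succ, mul_zero, zero_smul, add_zero, smul_zero,
        zero_add, mul_one, pow_zero, one_smul]
      module
  | succ a =>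
      rw [cc_succ q (a + 1)]
      simp only [Nat.succ_sub_one]
      module

/-- the generators' images in `End V` -/
def f (q ε : ℂ) : Fin 3 → Module.End ℂ V := ![T1, T2 q, T3 q ε]

lemma lift_rel (q ε : ℂ) : ∀ ⦃x y⦄, qpRel q ε x y →
    FreeAlgebra.lift ℂ (f q ε) x = FreeAlgebra.lift ℂ (f q ε) y := by
  have ht : ((q : ℂ) ^ 2)⁻¹ = t q := rfl
  rintro x y (⟨rfl, rfl⟩ | ⟨rfl, rfl⟩ | ⟨rfl, rfl⟩) <;>
    simp only [map_sub, map_smul, map_mul, map_pow, map_zero,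
      FreeAlgebra.lift_ι_apply, f, Matrix.cons_val_zero, Matrix.cons_val_one,
      Matrix.head_cons, Matrix.cons_val_two, Matrix.tail_cons, ht]
  · rw [rel1 q ε]; module
  · rw [rel2 q ε, pow_two]; module
  · rw [rel3 q ε]; module

/-- the representation of the quotient algebra -/
def ρ (q ε : ℂ) : RingQuot (qpRel q ε) →ₐ[ℂ] Module.End ℂ V :=
  RingQuot.liftAlgHom ℂ ⟨FreeAlgebra.lift ℂ (f q ε), lift_rel q ε⟩

/-- evaluating the monomial actions at the vacuum vector -/
lemma monomial_apply (q ε : ℂ) (a b c : ℕ) :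
    (T1 ^ a * T2 q ^ b * T3 q ε ^ c) (Finsupp.single ((0:ℕ), (0:ℕ), (0:ℕ)) 1) =
      Finsupp.single (a, b, c) 1 := by
  have h3 : ∀ c : ℕ, (T3 q ε ^ c) (Finsupp.single ((0:ℕ), (0:ℕ), (0:ℕ)) 1) =
      Finsupp.single ((0:ℕ), (0:ℕ), c) 1 := by
    intro c
    induction c with
    | zero => simp
    | succ c ih => rw [pow_succ', Module.End.mul_apply, ih, T3_single]; simp
  have h2 : ∀ b : ℕ, (T2 q ^ b) (Finsupp.single ((0:ℕ), (0:ℕ), c) 1) =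
      Finsupp.single ((0:ℕ), b, c) 1 := by
    intro b
    induction b with
    | zero => simp
    | succ b ih => rw [pow_succ', Module.End.mul_apply, ih, T2_single]; simp
  have h1 : ∀ a : ℕ, (T1 ^ a) (Finsupp.single ((0:ℕ), b, c) 1) =
      Finsupp.single (a, b, c) 1 := by
    intro a
    induction a with
    | zero => simp
    | succ a ih => rw [pow_succ', Module.End.mul_apply, ih, T1_single]; simp
  simp only [Module.End.mul_apply, h3, h2, h1]

section Quot

variable (q ε : ℂ)

/-- image of the first generator -/
def u0 : RingQuot (qpRel q ε) := RingQuot.mkAlgHom ℂ (qpRel q ε) (FreeAlgebra.ι ℂ 0)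

/-- image of the second generator -/
def u1 : RingQuot (qpRel q ε) := RingQuot.mkAlgHom ℂ (qpRel q ε) (FreeAlgebra.ι ℂ 1)

/-- image of the third generator -/
def u2 : RingQuot (qpRel q ε) := RingQuot.mkAlgHom ℂ (qpRel q ε) (FreeAlgebra.ι ℂ 2)

lemma qrel1 : u1 q ε * u0 q ε = t q • (u0 q ε * u1 q ε) := by
  have h : qpRel q ε (FreeAlgebra.ι ℂ 1 * FreeAlgebra.ι ℂ 0 -
      (q ^ 2)⁻¹ • (FreeAlgebra.ι ℂ 0 * FreeAlgebra.ι ℂ 1)) 0 := Or.inl ⟨rfl, rfl⟩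
  have h2 := RingQuot.mkAlgHom_rel ℂ h
  simp only [map_sub, map_smul, map_mul, map_zero, sub_eq_zero] at h2
  exact h2

lemma qrel2 : u2 q ε * u0 q ε =
    t q • (u0 q ε * u2 q ε) + ε • (u1 q ε * u1 q ε) := by
  have h : qpRel q ε (FreeAlgebra.ι ℂ 2 * FreeAlgebra.ι ℂ 0 -
      (q ^ 2)⁻¹ • (FreeAlgebra.ι ℂ 0 * FreeAlgebra.ι ℂ 2) -
      ε • (FreeAlgebra.ι ℂ 1 ^ 2)) 0 := Or.inr (Or.inl ⟨rfl, rfl⟩)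
  have h2 := RingQuot.mkAlgHom_rel ℂ h
  simp only [map_sub, map_smul, map_mul, map_pow, map_zero] at h2
  have h3 : u2 q ε * u0 q ε - t q • (u0 q ε * u2 q ε) - ε • (u1 q ε * u1 q ε) = 0 := by
    rw [← pow_two (u1 q ε)]; exact h2
  linear_combination (norm := module) h3

lemma qrel3 : u2 q ε * u1 q ε = t q • (u1 q ε * u2 q ε) := by
  have h : qpRel q ε (FreeAlgebra.ι ℂ 2 * FreeAlgebra.ι ℂ 1 -
      (q ^ 2)⁻¹ • (FreeAlgebra.ι ℂ 1 * FreeAlgebra.ι ℂ 2)) 0 :=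
    Or.inr (Or.inr ⟨rfl, rfl⟩)
  have h2 := RingQuot.mkAlgHom_rel ℂ h
  simp only [map_sub, map_smul, map_mul, map_zero, sub_eq_zero] at h2
  exact h2

lemma straight21 (a : ℕ) :
    u1 q ε * u0 q ε ^ a = t q ^ a • (u0 q ε ^ a * u1 q ε) := by
  induction a with
  | zero => simp
  | succ a ih =>
      calc u1 q ε * u0 q ε ^ (a + 1)
          = (u1 q ε * u0 q ε) * u0 q ε ^ a := by rw [pow_succ', ← mul_assoc]
        _ = t q • (u0 q ε * (u1 q ε * u0 q ε ^ a)) := by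
            rw [qrel1, smul_mul_assoc, mul_assoc]
        _ = (t q * t q ^ a) • (u0 q ε * (u0 q ε ^ a * u1 q ε)) := by
            rw [ih, mul_smul_comm, smul_smul]
        _ = t q ^ (a + 1) • (u0 q ε ^ (a + 1) * u1 q ε) := by
            rw [← mul_assoc, ← pow_succ', ← pow_succ']

lemma straight32 (b : ℕ) :
    u2 q ε * u1 q ε ^ b = t q ^ b • (u1 q ε ^ b * u2 q ε) := by
  induction b with
  | zero => simp
  | succ b ih =>
      calc u2 q ε * u1 q ε ^ (b + 1)
          = (u2 q ε * u1 q ε) * u1 q ε ^ b := by rw [pow_succ', ← mul_assoc]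
        _ = t q • (u1 q ε * (u2 q ε * u1 q ε ^ b)) := by
            rw [qrel3, smul_mul_assoc, mul_assoc]
        _ = (t q * t q ^ b) • (u1 q ε * (u1 q ε ^ b * u2 q ε)) := by
            rw [ih, mul_smul_comm, smul_smul]
        _ = t q ^ (b + 1) • (u1 q ε ^ (b + 1) * u2 q ε) := by
            rw [← mul_assoc, ← pow_succ', ← pow_succ']

lemma straight31 (a : ℕ) :
    u2 q ε * u0 q ε ^ a = t q ^ a • (u0 q ε ^ a * u2 q ε) +
      (ε * cc q a) • (u0 q ε ^ (a - 1) * u1 q ε ^ 2) := by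
  induction a with
  | zero => simp
  | succ a ih =>
      have step1 : u2 q ε * u0 q ε ^ (a + 1) =
          t q • (u0 q ε * (u2 q ε * u0 q ε ^ a)) +
            ε • (u1 q ε * (u1 q ε * u0 q ε ^ a)) := by
        rw [pow_succ', ← mul_assoc, qrel2, add_mul, smul_mul_assoc, smul_mul_assoc,
          mul_assoc, mul_assoc]
      have step2 : u1 q ε * (u1 q ε * u0 q ε ^ a) =
          (t q ^ a * t q ^ a) • (u0 q ε ^ a * u1 q ε ^ 2) := by
        rw [straight21, mul_smul_comm, ← mul_assoc, straight21, smul_mul_assoc,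
          smul_smul, mul_assoc, ← pow_two (u1 q ε)]
      rw [step1, step2, ih]
      simp only [mul_add, mul_smul_comm, smul_add, smul_smul, Nat.add_sub_cancel]
      rw [show u0 q ε * (u0 q ε ^ a * u2 q ε) = u0 q ε ^ (a + 1) * u2 q ε from by
        rw [← mul_assoc, ← pow_succ']]
      cases a with
      | zero =>
          simp only [cc_zero, mul_zero, zero_mul, zero_smul, add_zero, smul_zero,
            zero_add, pow_zero, one_mul, mul_one]
          rw [cc_succ]
          simp only [cc_zero, mul_zero, zero_add, pow_zero, mul_one]
          module
      | succ a =>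
          simp only [Nat.add_sub_cancel]
          rw [show u0 q ε * (u0 q ε ^ a * u1 q ε ^ 2) = u0 q ε ^ (a + 1) * u1 q ε ^ 2
            from by rw [← mul_assoc, ← pow_succ'], cc_succ q (a + 1)]
          module

/-- the ordered monomial family in the quotient -/
def mon (p : ℕ × ℕ × ℕ) : RingQuot (qpRel q ε) :=
  RingQuot.mkAlgHom ℂ (qpRel q ε)
    (FreeAlgebra.ι ℂ 0 ^ p.1 * FreeAlgebra.ι ℂ 1 ^ p.2.1 * FreeAlgebra.ι ℂ 2 ^ p.2.2)

lemma mon_eq (p : ℕ × ℕ × ℕ) :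
    mon q ε p = u0 q ε ^ p.1 * u1 q ε ^ p.2.1 * u2 q ε ^ p.2.2 := by
  simp [mon, u0, u1, u2, map_mul, map_pow]

lemma mul_mon0 (p : ℕ × ℕ × ℕ) :
    u0 q ε * mon q ε p = mon q ε (p.1 + 1, p.2.1, p.2.2) := by
  obtain ⟨a, b, c⟩ := p
  simp only [mon_eq]
  rw [← mul_assoc, ← mul_assoc, ← pow_succ']

lemma mul_mon1 (p : ℕ × ℕ × ℕ) :
    u1 q ε * mon q ε p = t q ^ p.1 • mon q ε (p.1, p.2.1 + 1, p.2.2) := by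
  obtain ⟨a, b, c⟩ := p
  simp only [mon_eq]
  rw [← mul_assoc, ← mul_assoc, straight21, smul_mul_assoc, smul_mul_assoc,
    mul_assoc (u0 q ε ^ a), ← pow_succ']

lemma mul_mon2 (p : ℕ × ℕ × ℕ) :
    u2 q ε * mon q ε p = t q ^ (p.1 + p.2.1) • mon q ε (p.1, p.2.1, p.2.2 + 1) +
      (ε * cc q p.1) • mon q ε (p.1 - 1, p.2.1 + 2, p.2.2) := by
  obtain ⟨a, b, c⟩ := p
  simp only [mon_eq]
  have lhs1 : u2 q ε * (u0 q ε ^ a * u1 q ε ^ b * u2 q ε ^ c) =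
      ((u2 q ε * u0 q ε ^ a) * u1 q ε ^ b) * u2 q ε ^ c := by
    rw [← mul_assoc, ← mul_assoc]
  rw [lhs1, straight31, add_mul, add_mul, smul_mul_assoc, smul_mul_assoc,
    smul_mul_assoc, smul_mul_assoc]
  congr 1
  · -- first term
    rw [mul_assoc (u0 q ε ^ a), straight32, mul_smul_comm, smul_mul_assoc,
      smul_smul, ← pow_add, ← mul_assoc, mul_assoc _ (u2 q ε), ← pow_succ']
  · -- second term
    rw [mul_assoc (u0 q ε ^ (a - 1)), ← pow_add, mul_assoc, ← mul_assoc,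
      Nat.add_comm 2 b]

end Quot

end QPProof

open QPProof in
/-- Proposition 7: the ordered monomials `u₁^a u₂^b u₃^c` form a ℂ-basis of the
quotient algebra, i.e. their images are linearly independent and span. -/
theorem ordered_monomials_basis (q ε : ℂ) (hq : q ≠ 0) :
    LinearIndependent ℂ
        (fun abc : ℕ × ℕ × ℕ =>
          RingQuot.mkAlgHom ℂ (qpRel q ε)
            (FreeAlgebra.ι ℂ 0 ^ abc.1 * FreeAlgebra.ι ℂ 1 ^ abc.2.1 *
              FreeAlgebra.ι ℂ 2 ^ abc.2.2)) ∧
      Submodule.span ℂ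
          (Set.range
            (fun abc : ℕ × ℕ × ℕ =>
              RingQuot.mkAlgHom ℂ (qpRel q ε)
                (FreeAlgebra.ι ℂ 0 ^ abc.1 * FreeAlgebra.ι ℂ 1 ^ abc.2.1 *
                  FreeAlgebra.ι ℂ 2 ^ abc.2.2))) = ⊤ := by
  have hfun : (fun abc : ℕ × ℕ × ℕ =>
      RingQuot.mkAlgHom ℂ (qpRel q ε)
        (FreeAlgebra.ι ℂ 0 ^ abc.1 * FreeAlgebra.ι ℂ 1 ^ abc.2.1 *
          FreeAlgebra.ι ℂ 2 ^ abc.2.2)) = mon q ε := rfl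
  rw [hfun]
  constructor
  · -- linear independence via the representation ρ
    set Φ : RingQuot (qpRel q ε) →ₗ[ℂ] V :=
      (LinearMap.applyₗ (Finsupp.single ((0:ℕ), (0:ℕ), (0:ℕ)) (1:ℂ))).comp
        (ρ q ε).toLinearMap with hΦ
    apply LinearIndependent.of_comp Φ
    have key : ∀ p : ℕ × ℕ × ℕ, Φ (mon q ε p) = Finsupp.single p 1 := by
      rintro ⟨a, b, c⟩
      have hrep : ρ q ε (mon q ε (a, b, c)) = T1 ^ a * T2 q ^ b * T3 q ε ^ c := by
        simp only [mon, ρ, RingQuot.liftAlgHom_mkAlgHom_apply, map_mul, map_pow,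
          FreeAlgebra.lift_ι_apply, f, Matrix.cons_val_zero, Matrix.cons_val_one,
          Matrix.head_cons, Matrix.cons_val_two, Matrix.tail_cons]
      show (ρ q ε) (mon q ε (a, b, c)) (Finsupp.single ((0:ℕ), (0:ℕ), (0:ℕ)) 1) = _
      rw [hrep]
      exact monomial_apply q ε a b c
    have hcomp : (Φ ∘ mon q ε) = fun p : ℕ × ℕ × ℕ => Finsupp.single p (1:ℂ) := by
      funext p; exact key p
    rw [hcomp, ← Finsupp.coe_basisSingleOne]
    exact Module.Basis.linearIndependent Finsupp.basisSingleOne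
  · -- spanning
    set W := Submodule.span ℂ (Set.range (mon q ε)) with hW
    have hone : (1 : RingQuot (qpRel q ε)) ∈ W := by
      have h1 : mon q ε (0, 0, 0) = 1 := by simp [mon_eq]
      rw [← h1]
      exact Submodule.subset_span ⟨(0, 0, 0), rfl⟩
    have hgen : ∀ i : Fin 3, ∀ w ∈ W,
        RingQuot.mkAlgHom ℂ (qpRel q ε) (FreeAlgebra.ι ℂ i) * w ∈ W := by
      intro i w hw
      induction hw using Submodule.span_induction with
      | mem x hx =>
          obtain ⟨p, rfl⟩ := hx
          fin_cases i
          · show u0 q ε * mon q ε p ∈ W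
            rw [mul_mon0]
            exact Submodule.subset_span ⟨_, rfl⟩
          · show u1 q ε * mon q ε p ∈ W
            rw [mul_mon1]
            exact Submodule.smul_mem _ _ (Submodule.subset_span ⟨_, rfl⟩)
          · show u2 q ε * mon q ε p ∈ W
            rw [mul_mon2]
            exact Submodule.add_mem _
              (Submodule.smul_mem _ _ (Submodule.subset_span ⟨_, rfl⟩))
              (Submodule.smul_mem _ _ (Submodule.subset_span ⟨_, rfl⟩))
      | zero => simp
      | add x y _ _ hx hy => rw [mul_add]; exact Submodule.add_mem _ hx hy
      | smul r x _ hx => rw [mul_smul_comm]; exact Submodule.smul_mem _ _ hx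
    have hall : ∀ x : RingQuot (qpRel q ε), x ∈ W := by
      intro x
      obtain ⟨y, rfl⟩ := RingQuot.mkAlgHom_surjective ℂ (qpRel q ε) x
      have main : ∀ y : FreeAlgebra ℂ (Fin 3), ∀ w ∈ W,
          RingQuot.mkAlgHom ℂ (qpRel q ε) y * w ∈ W := by
        intro y
        induction y using FreeAlgebra.induction with
        | grade0 r =>
            intro w hw
            rw [AlgHom.commutes]
            rw [← Algebra.smul_def]
            exact Submodule.smul_mem _ _ hw
        | grade1 i => exact hgen i
        | mul a b ha hb =>
            intro w hw
            rw [map_mul, mul_assoc]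
            exact ha _ (hb w hw)
        | add a b ha hb =>
            intro w hw
            rw [map_add, add_mul]
            exact Submodule.add_mem _ (ha w hw) (hb w hw)
      simpa using main y 1 hone
    exact Submodule.eq_top_iff'.mpr hall
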